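/- Under Assumptions A1 and A2 with affine tⱼ, the total flow served by MSPs at the induced equilibrium, Σⱼ xⱼ*(p₀) = Σⱼ (p₀ + V(t̄₀ − αⱼ) − c̃ⱼ)/(2Vβⱼ), is strictly less than Σⱼ tⱼ⁻¹(p₀/V + t̄₀) ≤ 1 for every p₀ ∈ [0, p₀^max], so the public transport flow x₀* = 1 − Σⱼ xⱼ*(p₀) is strictly positive. -/
import Mathlib

open scoped BigOperators

/-- Under A1 and A2 with affine congestion functions, the total flow
served by the MSPs at the induced equilibrium is strictly less than
Σⱼ tⱼ⁻¹(p₀/V + t̄₀) ≤ 1 for every p₀ ∈ [0, p₀ᵐᵃˣ], so the public transport flow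
x₀ = 1 − Σⱼ xⱼ* is strictly positive. -/
theorem stmt_15
    (N : ℕ) (hN : 0 < N)
    (V tbar p0max p0 : ℝ) (hV : 0 < V) (htbar : 0 ≤ tbar)
    (hp0 : p0 ∈ Set.Icc (0 : ℝ) p0max)
    (alpha beta ctil : Fin N → ℝ)
    (halpha : ∀ j, 0 ≤ alpha j) (hbeta : ∀ j, 0 < beta j) (hctil : ∀ j, 0 ≤ ctil j)
    (hcomp : ∀ j, ctil j + V * alpha j < p0 + V * tbar)
    -- Assumption A2 in the affine case (tⱼ⁻¹(y) = (y − αⱼ)/βⱼ)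
    (hA2 : (∑ j, (p0max / V + tbar - alpha j) / beta j) ≤ 1)
    -- flows served by the MSPs at their best responses
    (xstar : Fin N → ℝ)
    (hxstar : ∀ j, xstar j = (p0 + V * (tbar - alpha j) - ctil j) / (2 * V * beta j)) :
    (∑ j, xstar j) < (∑ j, (p0 / V + tbar - alpha j) / beta j) ∧
    (∑ j, (p0 / V + tbar - alpha j) / beta j) ≤ 1 ∧
    0 < 1 - ∑ j, xstar j := by
  have key : ∀ j, xstar j < (p0 / V + tbar - alpha j) / beta j := by
    intro j
    rw [hxstar j]
    have hb := hbeta j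
    have hA : 0 < p0 + V * (tbar - alpha j) - ctil j := by
      have := hcomp j; nlinarith [hctil j]
    have hB : 0 < p0 + V * (tbar - alpha j) := by nlinarith [hctil j]
    have heq : (p0 / V + tbar - alpha j) / beta j = (p0 + V * (tbar - alpha j)) / (V * beta j) := by
      field_simp; ring
    rw [heq]
    rw [div_lt_div_iff₀ (by positivity) (by positivity)]
    nlinarith [hctil j, mul_pos hV hb, mul_pos (mul_pos hV hb) hB]
  have h1 : (∑ j, xstar j) < (∑ j, (p0 / V + tbar - alpha j) / beta j) := by
    apply Finset.sum_lt_sum_of_nonempty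
    · exact Finset.univ_nonempty_iff.mpr ⟨⟨0, hN⟩⟩
    · intro j _; exact key j
  have h2 : (∑ j, (p0 / V + tbar - alpha j) / beta j) ≤ 1 := by
    refine le_trans (Finset.sum_le_sum ?_) hA2
    intro j _
    have hb := hbeta j
    gcongr
    exact hp0.2
  exact ⟨h1, h2, by linarith⟩
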